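/- Let a discrete group G act by homeomorphisms α on a locally compact Hausdorff space X, and suppose the action is topologically G-separating: for all open U₁, U₂ ⊆ X and compact K₁ ⊆ U₁, K₂ ⊆ U₂ there exist g₁, g₂ ∈ G with α_{g₁}(K₁) ⊆ U₁, α_{g₂}(K₂) ⊆ U₂ and α_{g₁}(K₁) ∩ α_{g₂}(K₂) = ∅. Then for every a, b ∈ C₀(X)₊, c ∈ C₀(X) and ε > 0 there exist d₁, d₂ ∈ C₀(X) and g₁, g₂ ∈ G with ‖d₁²·a − σ_{g₁}(a)‖ < ε, ‖d₂²·b − σ_{g₂}(b)‖ < ε and d₁·c·d₂ = 0, where σ_g(f) = f ∘ α_g⁻¹. -/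
import Mathlib

open scoped ComplexOrder
open Set Filter

private lemma aux_d {X : Type*} [TopologicalSpace X]
    (a : ZeroAtInftyContinuousMap X ℂ) (ha : ∀ x, 0 ≤ a x) (φ : X ≃ₜ X)
    {ε : ℝ} (hε : 0 < ε) (h : C(X, ℝ)) (hh01 : ∀ x, h x ∈ Set.Icc (0 : ℝ) 1)
    (hhc : HasCompactSupport h)
    (hh1 : ∀ x, ε / 4 ≤ ‖a x‖ → h (φ x) = 1)
    (himg : ∀ x, ε / 4 ≤ ‖a x‖ → ε / 8 < ‖a (φ x)‖) :
    ∃ d : ZeroAtInftyContinuousMap X ℂ,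
      (∀ x, h x = 0 → d x = 0) ∧ ‖d * d * a - a.comp φ.symm.toCocompactMap‖ < ε := by
  set q : X → ℝ := fun x => h x * Real.sqrt (‖a (φ.symm x)‖ / max ‖a x‖ (ε / 8)) with hq
  have hmpos : ∀ x : X, 0 < max ‖a x‖ (ε / 8) := fun x =>
    lt_of_lt_of_le (by linarith) (le_max_right _ _)
  have hqcont : Continuous fun x => (q x : ℂ) := by
    refine Complex.continuous_ofReal.comp (h.continuous.mul (Real.continuous_sqrt.comp ?_))
    exact ((a.continuous.comp φ.symm.continuous).norm).div
      ((a.continuous.norm).max continuous_const) (fun x => (hmpos x).ne')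
  have hq0 : ∀ x, h x = 0 → q x = 0 := fun x hx => by simp [hq, hx]
  have hzero : Tendsto (fun x => (q x : ℂ)) (cocompact X) (nhds 0) := by
    refine Tendsto.congr' ?_ tendsto_const_nhds
    refine eventuallyEq_of_mem (s := (tsupport h)ᶜ)
      (mem_cocompact.mpr ⟨tsupport h, hhc, subset_rfl⟩) (fun x hx => ?_)
    simp [hq0 x (image_eq_zero_of_notMem_tsupport hx)]
  refine ⟨⟨⟨fun x => (q x : ℂ), hqcont⟩, hzero⟩, fun x hx => by simp [hq0 x hx], ?_⟩
  rw [← ZeroAtInftyContinuousMap.norm_toBCF_eq_norm]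
  refine lt_of_le_of_lt ((BoundedContinuousFunction.norm_le (by linarith)).mpr ?_)
    (by linarith : ε / 4 < ε)
  intro x
  set r : ℝ := ‖a x‖ with hr
  set s : ℝ := ‖a (φ.symm x)‖ with hs
  set m : ℝ := max ‖a x‖ (ε / 8) with hm
  have hax : a x = (r : ℂ) := Complex.eq_coe_norm_of_nonneg (ha x)
  have hax' : a (φ.symm x) = (s : ℂ) := Complex.eq_coe_norm_of_nonneg (ha _)
  have happ : (((⟨⟨fun x => (q x : ℂ), hqcont⟩, hzero⟩ * ⟨⟨fun x => (q x : ℂ), hqcont⟩, hzero⟩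
      * a - a.comp φ.symm.toCocompactMap : ZeroAtInftyContinuousMap X ℂ)).toBCF x)
      = ((q x * q x * r - s : ℝ) : ℂ) := by
    have h1 : ((⟨⟨fun x => (q x : ℂ), hqcont⟩, hzero⟩ : ZeroAtInftyContinuousMap X ℂ)) x
        = (q x : ℂ) := rfl
    have h2 : (a.comp φ.symm.toCocompactMap) x = a (φ.symm x) := rfl
    simp only [ZeroAtInftyContinuousMap.toBCF_apply, ZeroAtInftyContinuousMap.coe_sub,
      ZeroAtInftyContinuousMap.coe_mul, Pi.sub_apply, Pi.mul_apply, h1, h2]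
    rw [hax, hax']
    push_cast
    ring
  rw [happ, Complex.norm_real, Real.norm_eq_abs]
  have hq2 : q x * q x = h x ^ 2 * (s / m) := by
    have hss : Real.sqrt (s / m) * Real.sqrt (s / m) = s / m :=
      Real.mul_self_sqrt (div_nonneg (norm_nonneg _) (hmpos x).le)
    simp only [hq]
    rw [← hs, ← hm]
    linear_combination h x * h x * hss
  rw [hq2]
  have hrm : r ≤ m := le_max_left _ _
  have hm0 : m ≠ 0 := (hmpos x).ne'
  by_cases hcase : ε / 4 ≤ s
  · have h1 : h x = 1 := by
      have := hh1 (φ.symm x) (by rwa [← hs])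
      rwa [Homeomorph.apply_symm_apply] at this
    have h2 : ε / 8 < r := by
      have := himg (φ.symm x) (by rwa [← hs])
      rwa [Homeomorph.apply_symm_apply] at this
    have hm : m = r := max_eq_left h2.le
    rw [h1, hm]
    have : s / r * r = s := div_mul_cancel₀ s (by linarith)
    rw [one_pow, one_mul, this, sub_self, abs_zero]
    linarith
  · push_neg at hcase
    have hs0 : 0 ≤ s := norm_nonneg _
    have hr0 : 0 ≤ r := norm_nonneg _
    have hh0 := (hh01 x).1
    have hh1' := (hh01 x).2
    have key : 0 ≤ h x ^ 2 * (s / m) * r ∧ h x ^ 2 * (s / m) * r ≤ s := by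
      constructor
      · positivity
      · calc h x ^ 2 * (s / m) * r ≤ 1 * (s / m) * m := by
              apply mul_le_mul _ hrm hr0 (by positivity)
              apply mul_le_mul_of_nonneg_right _ (by positivity)
              nlinarith
            _ = s := by rw [one_mul, div_mul_cancel₀ s hm0]
    rw [abs_le]
    constructor <;> nlinarith [key.1, key.2]

/-- If the action `α` of `G` on `X` is topologically `G`-separating, then for all
`a, b ∈ C₀(X)₊`, `c ∈ C₀(X)` and `ε > 0` there exist `d₁ d₂ ∈ C₀(X)` and `g₁ g₂ ∈ G` with
`‖d₁² a - σ_{g₁}(a)‖ < ε`, `‖d₂² b - σ_{g₂}(b)‖ < ε` and `d₁ c d₂ = 0`. -/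
theorem stmt5 {X G : Type*} [TopologicalSpace X] [LocallyCompactSpace X] [T2Space X] [Group G]
    (α : G → X ≃ₜ X) (hα : ∀ g h x, α (g * h) x = α g (α h x))
    (hsep : ∀ U₁ U₂ : Set X, IsOpen U₁ → IsOpen U₂ →
      ∀ K₁ K₂ : Set X, IsCompact K₁ → IsCompact K₂ → K₁ ⊆ U₁ → K₂ ⊆ U₂ →
        ∃ g₁ g₂ : G, ⇑(α g₁) '' K₁ ⊆ U₁ ∧ ⇑(α g₂) '' K₂ ⊆ U₂ ∧
          (⇑(α g₁) '' K₁) ∩ (⇑(α g₂) '' K₂) = ∅) :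
    ∀ a b c : ZeroAtInftyContinuousMap X ℂ, (∀ x, 0 ≤ a x) → (∀ x, 0 ≤ b x) →
      ∀ ε : ℝ, 0 < ε →
        ∃ (d₁ d₂ : ZeroAtInftyContinuousMap X ℂ) (g₁ g₂ : G),
          ‖d₁ * d₁ * a - a.comp (α g₁).symm.toCocompactMap‖ < ε ∧
          ‖d₂ * d₂ * b - b.comp (α g₂).symm.toCocompactMap‖ < ε ∧
          d₁ * c * d₂ = 0 := by
  intro a b c ha hb ε hε
  -- sublevel sets are compact
  have hcomp : ∀ f : ZeroAtInftyContinuousMap X ℂ, IsCompact {x | ε / 4 ≤ ‖f x‖} := by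
    intro f
    obtain ⟨t, htc, hts⟩ := mem_cocompact.mp
      (f.zero_at_infty' (Metric.ball_mem_nhds (0 : ℂ) (by linarith : (0:ℝ) < ε / 4)))
    refine htc.of_isClosed_subset (isClosed_le continuous_const f.continuous.norm) ?_
    intro x hx
    by_contra hxt
    have h2 := hts hxt
    simp only [Set.mem_preimage, Metric.mem_ball, dist_zero_right] at h2
    exact absurd (hx : ε / 4 ≤ ‖f x‖) (not_le.mpr h2)
  set K₁ : Set X := {x | ε / 4 ≤ ‖a x‖} with hK₁def
  set K₂ : Set X := {x | ε / 4 ≤ ‖b x‖} with hK₂def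
  set U₁ : Set X := {x | ε / 8 < ‖a x‖} with hU₁def
  set U₂ : Set X := {x | ε / 8 < ‖b x‖} with hU₂def
  have hU₁o : IsOpen U₁ := isOpen_lt continuous_const a.continuous.norm
  have hU₂o : IsOpen U₂ := isOpen_lt continuous_const b.continuous.norm
  obtain ⟨g₁, g₂, hg₁, hg₂, hdisj⟩ := hsep U₁ U₂ hU₁o hU₂o K₁ K₂ (hcomp a) (hcomp b)
    (fun x hx => lt_of_lt_of_le (by linarith : ε / 8 < ε / 4) (hx : ε / 4 ≤ ‖a x‖))
    (fun x hx => lt_of_lt_of_le (by linarith : ε / 8 < ε / 4) (hx : ε / 4 ≤ ‖b x‖))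
  have hL₁c : IsCompact (⇑(α g₁) '' K₁) := (hcomp a).image (α g₁).continuous
  have hL₂c : IsCompact (⇑(α g₂) '' K₂) := (hcomp b).image (α g₂).continuous
  obtain ⟨V₁, V₂, hV₁o, hV₂o, hLV₁, hLV₂, hVdisj⟩ :=
    SeparatedNhds.of_isCompact_isCompact hL₁c hL₂c (Set.disjoint_iff_inter_eq_empty.mpr hdisj)
  obtain ⟨h₁, hh₁1, hh₁0, hh₁c, hh₁01⟩ := exists_continuous_one_zero_of_isCompact hL₁c
    hV₁o.isClosed_compl (disjoint_compl_right_iff_subset.mpr hLV₁)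
  obtain ⟨h₂, hh₂1, hh₂0, hh₂c, hh₂01⟩ := exists_continuous_one_zero_of_isCompact hL₂c
    hV₂o.isClosed_compl (disjoint_compl_right_iff_subset.mpr hLV₂)
  obtain ⟨d₁, hd₁supp, hd₁norm⟩ := aux_d a ha (α g₁) hε h₁ hh₁01 hh₁c
    (fun x hx => hh₁1 (Set.mem_image_of_mem _ hx)) (fun x hx => hg₁ (Set.mem_image_of_mem _ hx))
  obtain ⟨d₂, hd₂supp, hd₂norm⟩ := aux_d b hb (α g₂) hε h₂ hh₂01 hh₂c
    (fun x hx => hh₂1 (Set.mem_image_of_mem _ hx)) (fun x hx => hg₂ (Set.mem_image_of_mem _ hx))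
  refine ⟨d₁, d₂, g₁, g₂, hd₁norm, hd₂norm, ?_⟩
  ext x
  simp only [ZeroAtInftyContinuousMap.coe_mul, Pi.mul_apply, ZeroAtInftyContinuousMap.coe_zero,
    Pi.zero_apply]
  by_cases hx1 : h₁ x = 0
  · rw [hd₁supp x hx1, zero_mul, zero_mul]
  · have hxV₁ : x ∈ V₁ := by
      by_contra hxV
      exact hx1 (hh₁0 hxV)
    have hxV₂ : x ∉ V₂ := fun hxV₂ => (hVdisj.ne_of_mem hxV₁ hxV₂) rfl
    rw [hd₂supp x (hh₂0 hxV₂), mul_zero]
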